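/- Choice Semantics: Let r = (k ~^c_R α ← B(r)) be a globally ground AC-rule with algebraic choice constraint head, standing for the two rules k ~_R α ← B(r) and X =_R α ← X =_R α^¬¬, B(r). Then for any σ-HT-interpretation (I^H, I^T): I_H ⊨_σ r if and only if (i) I_H ⊨_σ (k ~_R α ← B(r)) and (ii) I_H ⊨_σ (B_∧(r))^Σ implies ⟦(α)^Σ⟧_R(I_T) = ⟦(α)^Σ⟧_R(I_H). -/
import Mathlib


/-- The two worlds of HT logic. -/
inductive W : Type | H | T
deriving DecidableEq

/-- `W.le w w'` means `w' ≥ w` in the HT order (with `T ≥ H`). -/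
def W.le : W → W → Prop
  | .H, _ => True
  | .T, w' => w' = .T

/-- An HT-interpretation: a pair of sets of (variable-free) atoms with `h ⊆ t`. -/
structure HTI (A : Type*) where
  h : Set A
  t : Set A
  sub : h ⊆ t

/-- The component of a pointed HT-interpretation at world `w`. -/
def HTI.at {A : Type*} (I : HTI A) : W → Set A
  | .H => I.h
  | .T => I.t

mutual
/-- σ-formulas (with algebraic constraints) over domain `D`, ground atoms `A`,
    and a family of semirings `Rs i` (HOAS encoding of quantifiers). -/
inductive Fml (D A : Type) (ι : Type) (Rs : ι → Type) : Type 1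
  | bot
  | atom (a : A)
  | impl (φ ψ : Fml D A ι Rs)
  | or (φ ψ : Fml D A ι Rs)
  | and (φ ψ : Fml D A ι Rs)
  | ex (s : Set D) (b : D → Fml D A ι Rs)
  | all (s : Set D) (b : D → Fml D A ι Rs)
  /-- algebraic constraint `k ~_{Rs i} α`, where `cmp = (k ~ ·)` -/
  | constr (i : ι) (cmp : Rs i → Prop) (α : WFml D A ι Rs i)

/-- Weighted σ-formulas over the semiring `Rs i`. -/
inductive WFml (D A : Type) (ι : Type) (Rs : ι → Type) : ι → Type 1
  | const {i : ι} (k : Rs i) : WFml D A ι Rs i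
  | form {i : ι} (φ : Fml D A ι Rs) : WFml D A ι Rs i
  | wimpl {i : ι} (α β : WFml D A ι Rs i) : WFml D A ι Rs i
  | add {i : ι} (α β : WFml D A ι Rs i) : WFml D A ι Rs i
  | mul {i : ι} (α β : WFml D A ι Rs i) : WFml D A ι Rs i
  | neg {i : ι} (α : WFml D A ι Rs i) : WFml D A ι Rs i
  | inv {i : ι} (α : WFml D A ι Rs i) : WFml D A ι Rs i
  | sum {i : ι} (s : Set D) (b : D → WFml D A ι Rs i) : WFml D A ι Rs i
end

variable {D A : Type} {ι : Type} {Rs : ι → Type} [∀ i, Semiring (Rs i)]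

open Classical in
mutual
/-- HT satisfaction of σ-sentences (`nO`/`iO` interpret `-` and `⁻¹`). -/
noncomputable def Fml.sat (nO iO : ∀ i, Rs i → Rs i) (I : HTI A) : W → Fml D A ι Rs → Prop
  | _, .bot => False
  | w, .atom a => a ∈ I.at w
  | w, .impl φ ψ => ∀ w', W.le w w' → (Fml.sat nO iO I w' φ → Fml.sat nO iO I w' ψ)
  | w, .or φ ψ => Fml.sat nO iO I w φ ∨ Fml.sat nO iO I w ψ
  | w, .and φ ψ => Fml.sat nO iO I w φ ∧ Fml.sat nO iO I w ψ
  | w, .ex s b => ∃ ξ ∈ s, Fml.sat nO iO I w (b ξ)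
  | w, .all s b => ∀ ξ ∈ s, Fml.sat nO iO I w (b ξ)
  | w, .constr _ cmp α => ∀ w', W.le w w' → cmp (WFml.val nO iO I w' α)

/-- Value of a weighted σ-sentence over the semiring `Rs i`
    (`∑ᶠ` is `0` when the support is infinite, matching the junk case). -/
noncomputable def WFml.val (nO iO : ∀ i, Rs i → Rs i) (I : HTI A) :
    W → {i : ι} → WFml D A ι Rs i → Rs i
  | _, _, .const k => k
  | w, _, .form φ => if Fml.sat nO iO I w φ then 1 else 0
  | w, _, .wimpl α β =>
      if ∀ w', W.le w w' →
          (WFml.val nO iO I w' α = 0 ∨ WFml.val nO iO I w' β ≠ 0) then 1 else 0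
  | w, _, .add α β => WFml.val nO iO I w α + WFml.val nO iO I w β
  | w, _, .mul α β => WFml.val nO iO I w α * WFml.val nO iO I w β
  | w, _, .neg α => nO _ (WFml.val nO iO I w α)
  | w, _, .inv α => iO _ (WFml.val nO iO I w α)
  | w, _, .sum s b => ∑ᶠ ξ ∈ s, WFml.val nO iO I w (b ξ)
end

mutual
/-- `φ^¬¬`: prefix every atom of the σ-formula with `¬¬`. -/
noncomputable def Fml.dneg : Fml D A ι Rs → Fml D A ι Rs
  | .bot => .bot
  | .atom a => .impl (.impl (.atom a) .bot) .bot
  | .impl φ ψ => .impl φ.dneg ψ.dneg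
  | .or φ ψ => .or φ.dneg ψ.dneg
  | .and φ ψ => .and φ.dneg ψ.dneg
  | .ex s b => .ex s (fun ξ => (b ξ).dneg)
  | .all s b => .all s (fun ξ => (b ξ).dneg)
  | .constr i cmp α => .constr i cmp α.dneg

/-- `α^¬¬`: prefix every atom of the weighted σ-formula with `¬¬`. -/
noncomputable def WFml.dneg : {i : ι} → WFml D A ι Rs i → WFml D A ι Rs i
  | _, .const k => .const k
  | _, .form φ => .form φ.dneg
  | _, .wimpl α β => .wimpl α.dneg β.dneg
  | _, .add α β => .add α.dneg β.dneg
  | _, .mul α β => .mul α.dneg β.dneg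
  | _, .neg α => .neg α.dneg
  | _, .inv α => .inv α.dneg
  | _, .sum s b => .sum s (fun ξ => (b ξ).dneg)
end

lemma W.le_T' (w : W) : W.le w .T := by cases w <;> simp [W.le]

lemma W.le_refl' (w : W) : W.le w w := by cases w <;> simp [W.le]

lemma W.eq_T' {w : W} (h : W.le .T w) : w = .T := h

mutual
/-- Satisfaction of `φ^¬¬` at any world coincides with satisfaction of `φ` at `T`. -/
theorem sat_dneg (nO iO : ∀ i, Rs i → Rs i) (I : HTI A) :
    ∀ (w : W) (φ : Fml D A ι Rs),
      Fml.sat nO iO I w φ.dneg ↔ Fml.sat nO iO I .T φ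
  | w, .bot => by simp [Fml.dneg, Fml.sat]
  | w, .atom a => by
      simp only [Fml.dneg, Fml.sat]
      constructor
      · intro h
        by_contra hc
        exact h .T (W.le_T' w) (fun w2 h2 => by rw [W.eq_T' h2]; exact fun ha => hc ha)
      · intro h w1 _ hf
        exact hf .T (W.le_T' w1) h
  | w, .impl φ ψ => by
      simp only [Fml.dneg, Fml.sat]
      constructor
      · intro h w1 hle
        rw [W.eq_T' hle]
        have := h w (W.le_refl' w)
        rw [sat_dneg nO iO I w φ, sat_dneg nO iO I w ψ] at this
        exact this
      · intro h w1 _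
        rw [sat_dneg nO iO I w1 φ, sat_dneg nO iO I w1 ψ]
        exact h .T rfl
  | w, .or φ ψ => by
      simp only [Fml.dneg, Fml.sat]
      exact or_congr (sat_dneg nO iO I w φ) (sat_dneg nO iO I w ψ)
  | w, .and φ ψ => by
      simp only [Fml.dneg, Fml.sat]
      exact and_congr (sat_dneg nO iO I w φ) (sat_dneg nO iO I w ψ)
  | w, .ex s b => by
      simp only [Fml.dneg, Fml.sat]
      exact exists_congr fun ξ => and_congr_right fun _ => sat_dneg nO iO I w (b ξ)
  | w, .all s b => by
      simp only [Fml.dneg, Fml.sat]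
      exact forall_congr' fun ξ => imp_congr_right fun _ => sat_dneg nO iO I w (b ξ)
  | w, .constr i cmp α => by
      simp only [Fml.dneg, Fml.sat]
      constructor
      · intro h w1 hle
        rw [W.eq_T' hle]
        have := h w (W.le_refl' w)
        rwa [val_dneg nO iO I w α] at this
      · intro h w1 _
        rw [val_dneg nO iO I w1 α]
        exact h .T rfl

/-- The value of `α^¬¬` at any world coincides with the value of `α` at `T`. -/
theorem val_dneg (nO iO : ∀ i, Rs i → Rs i) (I : HTI A) :
    ∀ (w : W) {i : ι} (α : WFml D A ι Rs i),
      WFml.val nO iO I w α.dneg = WFml.val nO iO I .T α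
  | w, _, .const k => by simp [WFml.dneg, WFml.val]
  | w, _, .form φ => by
      simp only [WFml.dneg, WFml.val]
      exact @if_congr _ _ _ (Classical.propDecidable _) (Classical.propDecidable _) _ _ _ _ (sat_dneg nO iO I w φ) rfl rfl
  | w, _, .wimpl α β => by
      have hc : (∀ w1, W.le w w1 →
          (WFml.val nO iO I w1 α.dneg = 0 ∨ WFml.val nO iO I w1 β.dneg ≠ 0)) ↔
          (∀ w1, W.le .T w1 →
            (WFml.val nO iO I w1 α = 0 ∨ WFml.val nO iO I w1 β ≠ 0)) := by
        constructor
        · intro h w1 hle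
          rw [W.eq_T' hle]
          have := h w (W.le_refl' w)
          rwa [val_dneg nO iO I w α, val_dneg nO iO I w β] at this
        · intro h w1 _
          rw [val_dneg nO iO I w1 α, val_dneg nO iO I w1 β]
          exact h .T rfl
      simp only [WFml.dneg, WFml.val]
      exact @if_congr _ _ _ (Classical.propDecidable _) (Classical.propDecidable _) _ _ _ _ hc rfl rfl
  | w, _, .add α β => by
      simp only [WFml.dneg, WFml.val, val_dneg nO iO I w α, val_dneg nO iO I w β]
  | w, _, .mul α β => by
      simp only [WFml.dneg, WFml.val, val_dneg nO iO I w α, val_dneg nO iO I w β]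
  | w, _, .neg α => by
      simp only [WFml.dneg, WFml.val, val_dneg nO iO I w α]
  | w, _, .inv α => by
      simp only [WFml.dneg, WFml.val, val_dneg nO iO I w α]
  | w, _, .sum s b => by
      simp only [WFml.dneg, WFml.val]
      exact finsum_congr fun ξ => finsum_congr fun _ => val_dneg nO iO I w (b ξ)
end

/-- **Choice Semantics**: for a globally ground `AC`-rule `r = k ∼^c_R α ← B(r)`,
    which stands for the two rules `k ∼_R α ← B(r)` and `X =_R α ← X =_R α^¬¬, B(r)`
    (with `X` ranging over the carrier of `R`), and any σ-HT-interpretation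
    `(I^H, I^T)`:  `I_H ⊨ r` iff (i) `I_H ⊨ (k ∼_R α ← B(r))` and (ii) `I_H ⊨ (B_∧(r))^Σ`
    implies `⟦α^Σ⟧_R(I_T) = ⟦α^Σ⟧_R(I_H)`.  Here `B` is the (Σ-closed) body sentence
    `(B_∧(r))^Σ`, `α` is the Σ-closed head weighted sentence `(α)^Σ`, and
    `cmp = (k ∼ ·)` interprets the comparison of the constraint. -/
theorem choice_semantics (nO iO : ∀ i, Rs i → Rs i) (I : HTI A)
    (i0 : ι) (cmp : Rs i0 → Prop) (B : Fml D A ι Rs) (α : WFml D A ι Rs i0) :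
    (Fml.sat nO iO I .H (.impl B (.constr i0 cmp α)) ∧
      ∀ x : Rs i0, Fml.sat nO iO I .H
        (.impl (.and (.constr i0 (· = x) α.dneg) B) (.constr i0 (· = x) α)))
    ↔ (Fml.sat nO iO I .H (.impl B (.constr i0 cmp α)) ∧
        (Fml.sat nO iO I .H B →
          WFml.val nO iO I .T α = WFml.val nO iO I .H α)) := by
  refine and_congr_right fun _ => ?_
  constructor
  · intro h hB
    have := h (WFml.val nO iO I .T α) .H trivial
      ⟨fun w2 _ => by rw [val_dneg nO iO I w2 α], hB⟩ .H trivial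
    exact this.symm
  · intro h x w1 hw1 hyp w2 hw2
    obtain ⟨h1, hB1⟩ := hyp
    have hT : WFml.val nO iO I .T α = x := by
      have := h1 w1 (W.le_refl' w1)
      rwa [val_dneg nO iO I w1 α] at this
    cases w2 with
    | T => exact hT
    | H =>
      cases w1 with
      | T => exact absurd (W.eq_T' hw2) (by simp)
      | H => rw [← h hB1]; exact hT
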